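/- The system of real equations (A+B)(D+Ei)=0 (as a complex equation, i.e. (A+B)D = 0 and (A+B)E = 0), (F−Gi)(AB+BC+AC−F²−G²−D²−E²)=0 (i.e. F·S = 0 and G·S = 0 where S = AB+BC+AC−F²−G²−D²−E²), A²+D²+E²+F²+G²=1, A²−B²=0, C²+F²+G²=1 has solution set equal to the union of: (i) {A=B=−C=±1, D=E=F=G=0}; (ii) {A=B=C=±1, D=E=F=G=0}; (iii) {A=B=C=±1/2, D=E=0, F²+G²=3/4}; (iv) {A=−B, C=±1, F=G=0, A²+D²+E²=1}. -/
import Mathlib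

/- STATEMENT 2: Exact description of the solution set of the real system
   (A+B)D = 0, (A+B)E = 0, F·S = 0, G·S = 0 (S = AB+BC+AC−F²−G²−D²−E²),
   A²+D²+E²+F²+G² = 1, A² = B², C²+F²+G² = 1
   as the union of the four listed families. -/
set_option maxHeartbeats 1600000 in
theorem stmt2 (A B C D E F G : ℝ) :
    ((A + B) * D = 0 ∧ (A + B) * E = 0 ∧
      F * (A*B + B*C + A*C - F^2 - G^2 - D^2 - E^2) = 0 ∧
      G * (A*B + B*C + A*C - F^2 - G^2 - D^2 - E^2) = 0 ∧
      A^2 + D^2 + E^2 + F^2 + G^2 = 1 ∧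
      A^2 = B^2 ∧
      C^2 + F^2 + G^2 = 1) ↔
    ((A = B ∧ B = -C ∧ (A = 1 ∨ A = -1) ∧ D = 0 ∧ E = 0 ∧ F = 0 ∧ G = 0) ∨
     (A = B ∧ B = C ∧ (A = 1 ∨ A = -1) ∧ D = 0 ∧ E = 0 ∧ F = 0 ∧ G = 0) ∨
     (A = B ∧ B = C ∧ (A = 1/2 ∨ A = -1/2) ∧ D = 0 ∧ E = 0 ∧ F^2 + G^2 = 3/4) ∨
     (A = -B ∧ (C = 1 ∨ C = -1) ∧ F = 0 ∧ G = 0 ∧ A^2 + D^2 + E^2 = 1)) := by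
  constructor
  · rintro ⟨h1, h2, h3, h4, h5, h6, h7⟩
    have hAB : (A - B) * (A + B) = 0 := by nlinarith
    have hiv : A = -B → (A = B ∧ B = -C ∧ (A = 1 ∨ A = -1) ∧ D = 0 ∧ E = 0 ∧ F = 0 ∧ G = 0) ∨
     (A = B ∧ B = C ∧ (A = 1 ∨ A = -1) ∧ D = 0 ∧ E = 0 ∧ F = 0 ∧ G = 0) ∨
     (A = B ∧ B = C ∧ (A = 1/2 ∨ A = -1/2) ∧ D = 0 ∧ E = 0 ∧ F^2 + G^2 = 3/4) ∨
     (A = -B ∧ (C = 1 ∨ C = -1) ∧ F = 0 ∧ G = 0 ∧ A^2 + D^2 + E^2 = 1) := by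
      intro hA
      have hS : A*B + B*C + A*C - F^2 - G^2 - D^2 - E^2 = -1 := by
        rw [hA]; nlinarith
      rw [hS] at h3 h4
      have hF : F = 0 := by linarith
      have hG : G = 0 := by linarith
      have hC : (C - 1) * (C + 1) = 0 := by nlinarith
      rcases mul_eq_zero.mp hC with hc | hc
      · exact Or.inr (Or.inr (Or.inr ⟨hA, Or.inl (by linarith), hF, hG, by nlinarith⟩))
      · exact Or.inr (Or.inr (Or.inr ⟨hA, Or.inr (by linarith), hF, hG, by nlinarith⟩))
    rcases mul_eq_zero.mp hAB with hab | hab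
    · have hAeqB : A = B := by linarith
      by_cases hA0 : A = 0
      · exact hiv (by rw [hA0, ← hAeqB, hA0]; ring)
      · have hsum : A + B ≠ 0 := by rw [← hAeqB]; intro h; apply hA0; linarith
        have hD : D = 0 := by rcases mul_eq_zero.mp h1 with h | h; exact absurd h hsum; exact h
        have hE : E = 0 := by rcases mul_eq_zero.mp h2 with h | h; exact absurd h hsum; exact h
        subst hD hE hAeqB
        have hCA : (C - A) * (C + A) = 0 := by nlinarith
        by_cases hFG : F = 0 ∧ G = 0
        · obtain ⟨hF, hG⟩ := hFG
          subst hF hG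
          have hA1 : (A - 1) * (A + 1) = 0 := by nlinarith
          have hAv : A = 1 ∨ A = -1 := by
            rcases mul_eq_zero.mp hA1 with h | h
            · left; linarith
            · right; linarith
          rcases mul_eq_zero.mp hCA with hc | hc
          · exact Or.inr (Or.inl ⟨rfl, by linarith, hAv, rfl, rfl, rfl, rfl⟩)
          · exact Or.inl ⟨rfl, by linarith, hAv, rfl, rfl, rfl, rfl⟩
        · have hS : A*A + A*C + A*C - F^2 - G^2 - 0^2 - 0^2 = 0 := by
            by_cases hF : F = 0
            · have hG : G ≠ 0 := fun hG => hFG ⟨hF, hG⟩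
              rcases mul_eq_zero.mp h4 with h | h
              · exact absurd h hG
              · linarith
            · rcases mul_eq_zero.mp h3 with h | h
              · exact absurd h hF
              · linarith
          rcases mul_eq_zero.mp hCA with hc | hc
          · have hCA' : C = A := by linarith
            have h4A : (2*A - 1) * (2*A + 1) = 0 := by nlinarith [hS, hCA', h5]
            have hAv : A = 1/2 ∨ A = -1/2 := by
              rcases mul_eq_zero.mp h4A with h | h
              · left; linarith
              · right; linarith
            have hA2 : A^2 = 1/4 := by rcases hAv with h | h <;> rw [h] <;> norm_num
            exact Or.inr (Or.inr (Or.inl ⟨rfl, hCA'.symm, hAv, rfl, rfl, by nlinarith [hS, hA2, hCA']⟩))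
          · exfalso
            have hCA' : C = -A := by linarith
            have h01 : (0:ℝ) = 1 := by linear_combination hS + h5 - 2*A*hCA'
            norm_num at h01
    · exact hiv (by linarith)
  · rintro (⟨h1, h2, h3, h4, h5, h6, h7⟩ | ⟨h1, h2, h3, h4, h5, h6, h7⟩ |
      ⟨h1, h2, h3, h4, h5, h6⟩ | ⟨h1, h2, h3, h4, h5⟩)
    · subst h1 h4 h5 h6 h7
      have hA2 : A^2 = 1 := by rcases h3 with h | h <;> rw [h] <;> norm_num
      refine ⟨by ring, by ring, by ring, by ring, by linarith, by ring, ?_⟩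
      have : C = -A := by linarith [neg_eq_iff_eq_neg.mp h2.symm]
      rw [this]; nlinarith [hA2]
    · subst h1 h4 h5 h6 h7
      have hA2 : A^2 = 1 := by rcases h3 with h | h <;> rw [h] <;> norm_num
      refine ⟨by ring, by ring, by ring, by ring, by linarith, by ring, ?_⟩
      rw [← h2]; linarith
    · subst h1 h2 h4 h5
      have hA2 : A^2 = 1/4 := by rcases h3 with h | h <;> rw [h] <;> norm_num
      refine ⟨by ring, by ring, ?_, ?_, ?_, by ring, ?_⟩
      · linear_combination (-F) * h6 + (3*F) * hA2
      · linear_combination (-G) * h6 + (3*G) * hA2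
      · linarith
      · linarith
    · subst h3 h4
      have hC2 : C^2 = 1 := by rcases h2 with h | h <;> rw [h] <;> norm_num
      refine ⟨by rw [h1]; ring, by rw [h1]; ring, by ring, by ring, by linarith, by rw [h1]; ring, by linarith⟩
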